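/- Cone-covering lemma (Lemma 7 of the paper). For every n ≥ 1 there exist a natural number N and a constant λ ∈ (0,1), both depending only on n, with the following property: for every open set E ⊆ ℝⁿ of finite Lebesgue measure and every x ∈ E there exist points x₁, …, x_N in the topological boundary ∂E such that Γ(x) \ (E*_λ)^ ⊆ ⋃_{m=1}^N Γ(x_m), where (E*_λ)^ denotes the tent over the extension E*_λ. -/

import Mathlib

open MeasureTheory ENNReal Metric Set

noncomputable section

/-- The cone `Γ(x) = {(y,t) : ‖x - y‖ < t}` in the upper half-space. -/
def cone (n : ℕ) (x : EuclideanSpace ℝ (Fin n)) : Set (EuclideanSpace ℝ (Fin n) × ℝ) :=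
  {p | dist x p.1 < p.2}

/-- The tent `Ê = {(y,t) : t > 0, B(y,t) ⊆ E}` over a set `E ⊆ ℝⁿ`. -/
def tent (n : ℕ) (E : Set (EuclideanSpace ℝ (Fin n))) : Set (EuclideanSpace ℝ (Fin n) × ℝ) :=
  {p | 0 < p.2 ∧ Metric.ball p.1 p.2 ⊆ E}

/-- The extension `E*_λ = {z : ∃ open ball B' ∋ z with |E ∩ B'| > λ |B'|}`,
i.e. the set where the Hardy–Littlewood maximal function of `1_E` exceeds `λ`. -/
def ext (n : ℕ) (lam : ℝ) (E : Set (EuclideanSpace ℝ (Fin n))) :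
    Set (EuclideanSpace ℝ (Fin n)) :=
  {z | ∃ (c : EuclideanSpace ℝ (Fin n)) (r : ℝ), z ∈ Metric.ball c r ∧
    ENNReal.ofReal lam * volume (Metric.ball c r) < volume (E ∩ Metric.ball c r)}

open scoped RealInnerProductSpace

/-- A segment from a point of an open set `E` to a point outside of `E` meets `frontier E`. -/
private lemma segment_crossing {α : Type*} [NormedAddCommGroup α] [NormedSpace ℝ α]
    {E : Set α} (hE : IsOpen E) {A B : α} (hA : A ∈ E) (hB : B ∉ E) :
    ∃ q ∈ segment ℝ A B, q ∈ frontier E := by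
  by_contra h
  push_neg at h
  have hpre : IsPreconnected (segment ℝ A B) := (convex_segment A B).isPreconnected
  have hdich : segment ℝ A B ⊆ E ∪ interior Eᶜ := by
    intro p hp
    by_cases hpE : p ∈ E
    · exact Or.inl hpE
    · right
      rw [interior_compl, Set.mem_compl_iff]
      intro hcl
      exact h p hp ⟨hcl, by rwa [hE.interior_eq]⟩
  have hBint : B ∈ interior Eᶜ := by
    rw [interior_compl, Set.mem_compl_iff]
    intro hcl
    exact h B (right_mem_segment ℝ A B) ⟨hcl, by rwa [hE.interior_eq]⟩
  obtain ⟨p, hpseg, hpE, hpint⟩ :=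
    hpre E (interior Eᶜ) hE isOpen_interior hdich
      ⟨A, left_mem_segment ℝ A B, hA⟩ ⟨B, right_mem_segment ℝ A B, hBint⟩
  exact (interior_subset hpint) hpE

set_option maxHeartbeats 2000000 in
/-- Cone-covering lemma: there exist `N ∈ ℕ` and `λ ∈ (0,1)`, depending only on `n`, such
that for every open set `E ⊆ ℝⁿ` of finite measure and every `x ∈ E` there are points
`x₁, …, x_N ∈ ∂E` with `Γ(x) \ (E*_λ)^ ⊆ ⋃ₘ Γ(xₘ)`. -/
theorem cone_covering (n : ℕ) (hn : 1 ≤ n) :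
    ∃ (N : ℕ) (lam : ℝ), 0 < lam ∧ lam < 1 ∧
      ∀ E : Set (EuclideanSpace ℝ (Fin n)), IsOpen E → volume E < ⊤ →
        ∀ x ∈ E, ∃ xs : Fin N → EuclideanSpace ℝ (Fin n),
          (∀ m, xs m ∈ frontier E) ∧
          cone n x \ tent n (ext n lam E) ⊆ ⋃ m, cone n (xs m) := by
  classical
  have hn0 : n ≠ 0 := by omega
  haveI : Nonempty (Fin n) := ⟨⟨0, hn⟩⟩
  set V := EuclideanSpace ℝ (Fin n) with hVdef
  haveI : Nontrivial V := by
    refine ⟨0, EuclideanSpace.single ⟨0, hn⟩ (1:ℝ), fun hEq => ?_⟩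
    have h1 : ‖EuclideanSpace.single (⟨0, hn⟩ : Fin n) (1:ℝ)‖ = 1 := by
      rw [EuclideanSpace.norm_single]; norm_num
    rw [← hEq] at h1
    simp at h1
  have he₀ : ‖(EuclideanSpace.single (⟨0, hn⟩ : Fin n) (1:ℝ) : V)‖ = 1 := by
    rw [EuclideanSpace.norm_single]; norm_num
  -- a (1/8)-net of the unit sphere
  obtain ⟨T, hTs, hTfin, hTcov⟩ :
      ∃ T, T ⊆ sphere (0:V) 1 ∧ Set.Finite T ∧
        sphere (0:V) 1 ⊆ ⋃ w ∈ T, ball w (1/8) := by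
    have hcs : IsCompact (sphere (0:V) 1) := isCompact_sphere 0 1
    exact finite_approx_of_totallyBounded hcs.totallyBounded (1/8) (by norm_num)
  set W : Finset V := hTfin.toFinset with hWdef
  have hWunit : ∀ w ∈ W, ‖w‖ = 1 := by
    intro w hw
    have h1 : w ∈ T := by rwa [hWdef, Set.Finite.mem_toFinset] at hw
    simpa using hTs h1
  have hWnet : ∀ u : V, ‖u‖ = 1 → ∃ w ∈ W, ‖u - w‖ ≤ 1/8 := by
    intro u hu
    have hu' : u ∈ sphere (0:V) 1 := by simpa using hu
    obtain ⟨w, hw, hwu⟩ := Set.mem_iUnion₂.mp (hTcov hu')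
    refine ⟨w, by rwa [hWdef, Set.Finite.mem_toFinset], ?_⟩
    have h2 : dist u w < 1/8 := hwu
    replace h2 : ‖u - w‖ < 1/8 := lt_of_eq_of_lt (dist_eq_norm (E := EuclideanSpace ℝ (Fin n)) u w).symm h2
    linarith
  refine ⟨W.card, ((1:ℝ)/1024)^n, by positivity, ?_, ?_⟩
  · exact pow_lt_one₀ (by norm_num) (by norm_num) hn0
  intro E hEopen hEvol x hxE
  set lam : ℝ := ((1:ℝ)/1024)^n with hlamdef
  have hlam_nonneg : 0 ≤ lam := by positivity
  -- volume of balls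
  set ω : ℝ≥0∞ := volume (ball (0:V) 1) with hωdef
  have hω0 : ω ≠ 0 := (measure_ball_pos _ _ one_pos).ne'
  have hωtop : ω ≠ ⊤ := measure_ball_lt_top.ne
  have hballvol : ∀ (c : V) (r : ℝ), 0 ≤ r →
      volume (ball c r) = ENNReal.ofReal (r^n) * ω := by
    intro c r hr
    rw [hωdef, MeasureTheory.Measure.addHaar_ball volume c hr, finrank_euclideanSpace_fin]
  -- key volume comparison
  have hcomp : ∀ (c₁ c₂ : V) (r₁ r₂ : ℝ), 0 ≤ r₁ → 0 < r₂ →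
      ball c₁ r₁ ⊆ E ∩ ball c₂ r₂ →
      volume (E ∩ ball c₂ r₂) ≤ ENNReal.ofReal lam * volume (ball c₂ r₂) →
      r₁ ≤ r₂ / 1024 := by
    intro c₁ c₂ r₁ r₂ hr₁ hr₂ hsub hs
    have h1 : volume (ball c₁ r₁) ≤ ENNReal.ofReal lam * volume (ball c₂ r₂) :=
      le_trans (measure_mono hsub) hs
    rw [hballvol c₁ r₁ hr₁, hballvol c₂ r₂ hr₂.le, ← mul_assoc,
      ← ENNReal.ofReal_mul hlam_nonneg] at h1
    have h2 : r₁ ^ n ≤ lam * r₂ ^ n := by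
      have h3 := (ENNReal.mul_le_mul_iff_left hω0 hωtop).mp h1
      exact (ENNReal.ofReal_le_ofReal_iff (by positivity)).mp h3
    have h5 : lam * r₂ ^ n = (r₂ / 1024) ^ n := by
      rw [hlamdef, div_pow, div_pow, one_pow]
      ring
    rw [h5] at h2
    exact le_of_pow_le_pow_left₀ hn0 (by positivity) h2
  -- large balls are not contained in E
  have hbig : ∃ r : ℝ, 0 < r ∧ ∀ c : V, ¬ ball c r ⊆ E := by
    obtain ⟨k, hk⟩ := ENNReal.exists_nat_gt (ENNReal.div_lt_top hEvol.ne hω0).ne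
    refine ⟨(k+1 : ℕ), by positivity, ?_⟩
    intro c hsub
    have h2 : volume E < (k : ℝ≥0∞) * ω := by
      calc volume E = volume E / ω * ω := (ENNReal.div_mul_cancel hω0 hωtop).symm
        _ < (k : ℝ≥0∞) * ω := (ENNReal.mul_lt_mul_iff_left hω0 hωtop).mpr hk
    have h1 : volume E < ENNReal.ofReal (((k+1 : ℕ):ℝ)^n) * ω := by
      refine lt_of_lt_of_le h2 (mul_le_mul_left ?_ ω)
      rw [← ENNReal.ofReal_natCast k]
      refine ENNReal.ofReal_le_ofReal ?_
      calc (k:ℝ) ≤ ((k+1 : ℕ):ℝ) := by exact_mod_cast Nat.le_succ k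
        _ ≤ ((k+1 : ℕ):ℝ)^n :=
            le_self_pow₀ (by exact_mod_cast Nat.succ_le_succ (Nat.zero_le k)) hn0
    have h3 : volume (ball c ((k+1 : ℕ):ℝ)) ≤ volume E := measure_mono hsub
    rw [hballvol c _ (by positivity)] at h3
    exact absurd (lt_of_le_of_lt h3 h1) (lt_irrefl _)
  -- distance to the frontier
  set d : ℝ := Metric.infDist x (frontier E) with hddef
  have hd_nonneg : 0 ≤ d := Metric.infDist_nonneg
  have hball_d : ball x d ⊆ E := by
    intro y hy
    by_contra hyE
    obtain ⟨q, hqseg, hqfr⟩ := segment_crossing hEopen hxE hyE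
    have h1 : d ≤ dist x q := Metric.infDist_le_dist_of_mem hqfr
    rw [segment_eq_image'] at hqseg
    obtain ⟨θ, hθ, rfl⟩ := hqseg
    have h2 : dist x (x + θ • (y - x)) = θ * ‖y - x‖ := by
      rw [dist_eq_norm]
      have h2a : x - (x + θ • (y - x)) = -(θ • (y - x)) := by abel
      rw [h2a, norm_neg, norm_smul, Real.norm_eq_abs, abs_of_nonneg hθ.1]
    have h3 : ‖y - x‖ < d := by
      have h3a := mem_ball.mp hy
      rwa [dist_eq_norm] at h3a
    rw [h2] at h1
    nlinarith [hθ.1, hθ.2, norm_nonneg (y - x)]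
  -- geometry of the test ball
  have hregion : ∀ (w : V), ‖w‖ = 1 → ∀ r : ℝ, 0 < r → ∀ v ∈ ball (x + (8*r) • w) r,
      ((3:ℝ)/4) * ‖v - x‖ ≤ ⟪v - x, w⟫ ∧ ‖v - x‖ ≤ 9*r := by
    intro w hw r hr v hv
    have he : ‖v - (x + (8*r) • w)‖ < r := by
      rw [← dist_eq_norm]; exact mem_ball.mp hv
    have hvx : v - x = (8*r) • w + (v - (x + (8*r) • w)) := by abel
    have hinner : ⟪v - x, w⟫ = 8*r + ⟪v - (x + (8*r) • w), w⟫ := by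
      rw [hvx, inner_add_left, real_inner_smul_left, real_inner_self_eq_norm_sq, hw]
      ring
    have hie : |⟪v - (x + (8*r) • w), w⟫| ≤ ‖v - (x + (8*r) • w)‖ := by
      have h1 := abs_real_inner_le_norm (v - (x + (8*r) • w)) w
      rwa [hw, mul_one] at h1
    have hnorm : ‖v - x‖ ≤ 9*r := by
      rw [hvx]
      calc ‖(8*r) • w + (v - (x + (8*r) • w))‖
          ≤ ‖(8*r) • w‖ + ‖v - (x + (8*r) • w)‖ := norm_add_le _ _
        _ ≤ 8*r + r := by
            rw [norm_smul, Real.norm_eq_abs, abs_of_nonneg (by positivity), hw, mul_one]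
            linarith
        _ = 9*r := by ring
    refine ⟨?_, hnorm⟩
    have h7 : 8*r - r ≤ ⟪v - x, w⟫ := by
      rw [hinner]
      have h8 := abs_le.mp hie
      linarith
    linarith
  -- from an outside point, a well-aligned frontier point
  have hA : ∀ (w : V), ‖w‖ = 1 → ∀ v : V, v ∉ E → ((3:ℝ)/4) * ‖v - x‖ ≤ ⟪v - x, w⟫ →
      ∃ q, q ∈ frontier E ∧ ((3:ℝ)/4) * ‖q - x‖ ≤ ⟪q - x, w⟫ ∧
        ‖q - x‖ ≤ max (d/2) ‖v - x‖ := by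
    intro w hw v hvE hva
    have hastar : x + (d/2) • w ∈ E := by
      rcases eq_or_lt_of_le hd_nonneg with h0 | h0
    -- d = 0 : the point is x itself
      · rw [← h0]
        norm_num
        exact hxE
      · apply hball_d
        rw [mem_ball, dist_eq_norm]
        have h1 : x + (d/2) • w - x = (d/2) • w := by abel
        rw [h1, norm_smul, Real.norm_eq_abs, abs_of_nonneg (by linarith), hw, mul_one]
        linarith
    obtain ⟨q, hqseg, hqfr⟩ := segment_crossing hEopen hastar hvE
    rw [segment_eq_image'] at hqseg
    obtain ⟨θ, hθ, rfl⟩ := hqseg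
    have hq : x + (d/2) • w + θ • (v - (x + (d/2) • w)) - x
        = ((1-θ) * (d/2)) • w + θ • (v - x) := by
      module
    refine ⟨_, hqfr, ?_, ?_⟩
    · rw [hq]
      have hi : ⟪((1-θ) * (d/2)) • w + θ • (v - x), w⟫
          = (1-θ) * (d/2) + θ * ⟪v - x, w⟫ := by
        rw [inner_add_left, real_inner_smul_left, real_inner_smul_left,
          real_inner_self_eq_norm_sq, hw]
        ring
      rw [hi]
      have hnq : ‖((1-θ) * (d/2)) • w + θ • (v - x)‖
          ≤ (1-θ) * (d/2) + θ * ‖v - x‖ := by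
        calc ‖((1-θ) * (d/2)) • w + θ • (v - x)‖
            ≤ ‖((1-θ) * (d/2)) • w‖ + ‖θ • (v - x)‖ := norm_add_le _ _
          _ = (1-θ) * (d/2) + θ * ‖v - x‖ := by
              rw [norm_smul, norm_smul, Real.norm_eq_abs, Real.norm_eq_abs,
                abs_of_nonneg (by nlinarith [hθ.1, hθ.2] : (0:ℝ) ≤ (1-θ) * (d/2)),
                abs_of_nonneg hθ.1, hw, mul_one]
      nlinarith [mul_le_mul_of_nonneg_left hva hθ.1, hθ.1, hθ.2, hd_nonneg,
        norm_nonneg (v - x)]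
    · rw [hq]
      have hnq : ‖((1-θ) * (d/2)) • w + θ • (v - x)‖
          ≤ (1-θ) * (d/2) + θ * ‖v - x‖ := by
        calc ‖((1-θ) * (d/2)) • w + θ • (v - x)‖
            ≤ ‖((1-θ) * (d/2)) • w‖ + ‖θ • (v - x)‖ := norm_add_le _ _
          _ = (1-θ) * (d/2) + θ * ‖v - x‖ := by
              rw [norm_smul, norm_smul, Real.norm_eq_abs, Real.norm_eq_abs,
                abs_of_nonneg (by nlinarith [hθ.1, hθ.2] : (0:ℝ) ≤ (1-θ) * (d/2)),
                abs_of_nonneg hθ.1, hw, mul_one]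
      have hm1 : d/2 ≤ max (d/2) ‖v - x‖ := le_max_left _ _
      have hm2 : ‖v - x‖ ≤ max (d/2) ‖v - x‖ := le_max_right _ _
      nlinarith [hθ.1, hθ.2]
  -- in every direction there is a well-aligned frontier point
  have hglobal : ∀ (w : V), ‖w‖ = 1 →
      ∃ q, q ∈ frontier E ∧ ((3:ℝ)/4) * ‖q - x‖ ≤ ⟪q - x, w⟫ := by
    intro w hw
    obtain ⟨r, hr, hns⟩ := hbig
    obtain ⟨v, hvball, hvE⟩ := Set.not_subset.mp (hns (x + (8*r) • w))
    have hreg := hregion w hw r hr v hvball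
    obtain ⟨q, hq1, hq2, _⟩ := hA w hw v hvE hreg.1
    exact ⟨q, hq1, hq2⟩
  -- frontier is nonempty and has positive distance from x
  obtain ⟨q₀, hq₀fr, -⟩ := hglobal _ he₀
  have hfr_ne : (frontier E).Nonempty := ⟨q₀, hq₀fr⟩
  have hxfr : x ∉ frontier E := fun hx => hx.2 (by rwa [hEopen.interior_eq])
  have hd_pos : 0 < d :=
    (IsClosed.notMem_iff_infDist_pos isClosed_frontier hfr_ne).mp hxfr
  have hd_le : ∀ q ∈ frontier E, d ≤ ‖q - x‖ := by
    intro q hq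
    have h1 : d ≤ dist x q := Metric.infDist_le_dist_of_mem hq
    rwa [dist_eq_norm, norm_sub_rev] at h1
  -- selection of an almost minimal well-aligned frontier point in each direction
  have hsel : ∀ (w : V), ‖w‖ = 1 →
      ∃ q, (q ∈ frontier E ∧ ((5:ℝ)/8) * ‖q - x‖ ≤ ⟪q - x, w⟫) ∧
      ∀ q', q' ∈ frontier E → ((5:ℝ)/8) * ‖q' - x‖ ≤ ⟪q' - x, w⟫ →
        ‖q - x‖ ≤ 2 * ‖q' - x‖ := by
    intro w hw
    set S : Set ℝ :=
      {a | ∃ q, (q ∈ frontier E ∧ ((5:ℝ)/8) * ‖q - x‖ ≤ ⟪q - x, w⟫) ∧ a = ‖q - x‖}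
      with hSdef
    have hSne : S.Nonempty := by
      obtain ⟨q, hq1, hq2⟩ := hglobal w hw
      exact ⟨‖q - x‖, q, ⟨hq1, by nlinarith [norm_nonneg (q - x)]⟩, rfl⟩
    have hSbdd : BddBelow S := by
      refine ⟨0, ?_⟩
      rintro a ⟨q, -, rfl⟩
      exact norm_nonneg _
    have hm : d ≤ sInf S := by
      apply le_csInf hSne
      rintro a ⟨q, ⟨hq1, -⟩, rfl⟩
      exact hd_le q hq1
    have hmpos : 0 < sInf S := lt_of_lt_of_le hd_pos hm
    obtain ⟨a, haS, halt⟩ := (csInf_lt_iff hSbdd hSne).mp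
      (by linarith : sInf S < 2 * sInf S)
    obtain ⟨q, hq, rfl⟩ := haS
    refine ⟨q, hq, ?_⟩
    intro q' hq1' hq2'
    have h1 : sInf S ≤ ‖q' - x‖ := csInf_le hSbdd ⟨q', ⟨hq1', hq2'⟩, rfl⟩
    linarith
  -- the chosen points
  set g : {a // a ∈ W} → V := fun w => (hsel (w : V) (hWunit _ w.2)).choose with hgdef
  have hgspec : ∀ w : {a // a ∈ W},
      ((g w ∈ frontier E ∧ ((5:ℝ)/8) * ‖g w - x‖ ≤ ⟪g w - x, (w:V)⟫) ∧
      ∀ q', q' ∈ frontier E → ((5:ℝ)/8) * ‖q' - x‖ ≤ ⟪q' - x, (w:V)⟫ →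
        ‖g w - x‖ ≤ 2 * ‖q' - x‖) :=
    fun w => (hsel (w : V) (hWunit _ w.2)).choose_spec
  refine ⟨fun i => g (W.equivFin.symm i), fun i => (hgspec _).1.1, ?_⟩
  rintro ⟨y, t⟩ ⟨hcone, hnt⟩
  have hcone' : dist x y < t := hcone
  have ht0 : 0 < t := lt_of_le_of_lt dist_nonneg hcone'
  have hnsub : ¬ ball y t ⊆ ext n lam E := fun hsub => hnt ⟨ht0, hsub⟩
  obtain ⟨z, hzball, hzext⟩ := Set.not_subset.mp hnsub
  have hsp : ∀ (c : V) (r : ℝ), z ∈ ball c r →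
      volume (E ∩ ball c r) ≤ ENNReal.ofReal lam * volume (ball c r) := by
    intro c r hzc
    by_contra hlt
    exact hzext ⟨c, r, hzc, lt_of_not_ge hlt⟩
  have hzx : dist x z < 2 * t := by
    have h1 : dist y z < t := by rwa [mem_ball, dist_comm] at hzball
    calc dist x z ≤ dist x y + dist y z := dist_triangle x y z
      _ < t + t := by linarith
      _ = 2*t := by ring
  have hsp4 : volume (E ∩ ball z (4*t)) ≤ ENNReal.ofReal lam * volume (ball z (4*t)) :=
    hsp z (4*t) (mem_ball_self (by linarith))
  -- d is small compared with t
  have hdt : d ≤ t/256 := by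
    have hmin : min d t ≤ (4*t)/1024 := by
      refine hcomp x z (min d t) (4*t) (le_min hd_nonneg ht0.le) (by linarith) ?_ hsp4
      intro p hp
      refine ⟨hball_d (ball_subset_ball (min_le_left d t) hp), ?_⟩
      have h1 : dist p x < min d t := mem_ball.mp hp
      have h2 : min d t ≤ t := min_le_right d t
      rw [mem_ball]
      calc dist p z ≤ dist p x + dist x z := dist_triangle p x z
        _ < 4*t := by linarith
    rcases le_total d t with h | h
    · rw [min_eq_left h] at hmin; linarith
    · exfalso; rw [min_eq_right h] at hmin; linarith
  -- main lemma : a well-aligned frontier point at scale t in every direction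
  have hLB : ∀ (w : V), ‖w‖ = 1 →
      ∃ q, q ∈ frontier E ∧ ((3:ℝ)/4) * ‖q - x‖ ≤ ⟪q - x, w⟫ ∧ ‖q - x‖ ≤ 9*t/128 := by
    intro w hw
    have hv : ∃ v, v ∈ ball (x + (8*(t/128)) • w) (t/128) ∧ v ∉ E := by
      by_contra hcon
      push_neg at hcon
      have h1 : ball (x + (8*(t/128)) • w) (t/128) ⊆ E ∩ ball z (4*t) := by
        intro p hp
        refine ⟨hcon p hp, ?_⟩
        have h2 : dist p (x + (8*(t/128)) • w) < t/128 := mem_ball.mp hp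
        have h3 : dist (x + (8*(t/128)) • w) x = 8*(t/128) := by
          rw [dist_eq_norm]
          have h3a : x + (8*(t/128)) • w - x = (8*(t/128)) • w := by abel
          rw [h3a, norm_smul, Real.norm_eq_abs, abs_of_nonneg (by linarith), hw, mul_one]
        rw [mem_ball]
        calc dist p z ≤ dist p (x + (8*(t/128)) • w) + dist (x + (8*(t/128)) • w) x
              + dist x z := dist_triangle4 p _ x z
          _ < t/128 + 8*(t/128) + 2*t := by linarith
          _ < 4*t := by linarith
      have h4 := hcomp _ z (t/128) (4*t) (by linarith) (by linarith) h1 hsp4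
      linarith
    obtain ⟨v, hvball, hvE⟩ := hv
    have hreg := hregion w hw (t/128) (by linarith) v hvball
    obtain ⟨q, hq1, hq2, hq3⟩ := hA w hw v hvE hreg.1
    refine ⟨q, hq1, hq2, ?_⟩
    have h5 : max (d/2) ‖v - x‖ ≤ 9*t/128 := by
      apply max_le
      · linarith
      · have h6 := hreg.2; linarith
    linarith
  set s : ℝ := dist x y with hsdef
  rcases le_or_gt s (t/2) with hcase | hcase
  · -- near case : any net point will do
    obtain ⟨w₀, hw₀W, -⟩ := hWnet _ he₀
    have hw₀u : ‖w₀‖ = 1 := hWunit _ hw₀W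
    obtain ⟨qt, hqtfr, hqtal, hqtno⟩ := hLB w₀ hw₀u
    have hqs := hgspec ⟨w₀, hw₀W⟩
    have hbound : ‖g ⟨w₀, hw₀W⟩ - x‖ ≤ 2 * ‖qt - x‖ := by
      apply hqs.2 qt hqtfr
      nlinarith [norm_nonneg (qt - x), hqtal]
    refine Set.mem_iUnion.mpr ⟨W.equivFin ⟨w₀, hw₀W⟩, ?_⟩
    show dist (g (W.equivFin.symm (W.equivFin ⟨w₀, hw₀W⟩))) y < t
    rw [Equiv.symm_apply_apply]
    calc dist (g ⟨w₀, hw₀W⟩) y ≤ dist (g ⟨w₀, hw₀W⟩) x + dist x y := dist_triangle _ x y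
      _ ≤ 2 * ‖qt - x‖ + s := by
          rw [dist_eq_norm]
          linarith
      _ ≤ 2 * (9*t/128) + t/2 := by linarith
      _ < t := by linarith
  · -- far case
    have hs0 : 0 < s := by linarith
    set u : V := s⁻¹ • (y - x) with hudef
    have hyx : ‖y - x‖ = s := by rw [hsdef, dist_comm, dist_eq_norm]
    have hu1 : ‖u‖ = 1 := by
      rw [hudef, norm_smul, Real.norm_eq_abs, abs_of_nonneg (inv_nonneg.mpr hs0.le), hyx]
      field_simp
    have hy_eq : y = x + s • u := by
      rw [hudef, smul_smul, mul_inv_cancel₀ hs0.ne', one_smul]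
      abel
    obtain ⟨qt, hqtfr, hqtal, hqtno⟩ := hLB u hu1
    obtain ⟨w, hwW, hwu⟩ := hWnet u hu1
    have hwunit : ‖w‖ = 1 := hWunit _ hwW
    have hqtw : ((5:ℝ)/8) * ‖qt - x‖ ≤ ⟪qt - x, w⟫ := by
      have h1 : ⟪qt - x, w⟫ = ⟪qt - x, u⟫ - ⟪qt - x, u - w⟫ := by
        rw [inner_sub_right]; ring
      have h2 : |⟪qt - x, u - w⟫| ≤ ‖qt - x‖ * (1/8) := by
        calc |⟪qt - x, u - w⟫| ≤ ‖qt - x‖ * ‖u - w‖ := abs_real_inner_le_norm _ _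
          _ ≤ ‖qt - x‖ * (1/8) := mul_le_mul_of_nonneg_left hwu (norm_nonneg _)
      have h3 := abs_le.mp h2
      rw [h1]; linarith
    have hqs := hgspec ⟨w, hwW⟩
    have hQfr : g ⟨w, hwW⟩ ∈ frontier E := hqs.1.1
    have hQal : ((5:ℝ)/8) * ‖g ⟨w, hwW⟩ - x‖ ≤ ⟪g ⟨w, hwW⟩ - x, w⟫ := hqs.1.2
    have hQno : ‖g ⟨w, hwW⟩ - x‖ ≤ 2 * ‖qt - x‖ := hqs.2 qt hqtfr hqtw
    have ha_d : d ≤ ‖g ⟨w, hwW⟩ - x‖ := hd_le _ hQfr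
    have ha_pos : 0 < ‖g ⟨w, hwW⟩ - x‖ := lt_of_lt_of_le hd_pos ha_d
    have ht2s : t ≤ 2*s := by linarith
    have ha_small : ‖g ⟨w, hwW⟩ - x‖ ≤ 9*s/32 := by
      have h1 : ‖g ⟨w, hwW⟩ - x‖ ≤ 2*(9*t/128) := by linarith
      linarith
    have hQu : ((1:ℝ)/2) * ‖g ⟨w, hwW⟩ - x‖ ≤ ⟪g ⟨w, hwW⟩ - x, u⟫ := by
      have h1 : ⟪g ⟨w, hwW⟩ - x, u⟫
          = ⟪g ⟨w, hwW⟩ - x, w⟫ - ⟪g ⟨w, hwW⟩ - x, w - u⟫ := by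
        rw [inner_sub_right]; ring
      have h2 : |⟪g ⟨w, hwW⟩ - x, w - u⟫| ≤ ‖g ⟨w, hwW⟩ - x‖ * (1/8) := by
        calc |⟪g ⟨w, hwW⟩ - x, w - u⟫|
            ≤ ‖g ⟨w, hwW⟩ - x‖ * ‖w - u‖ := abs_real_inner_le_norm _ _
          _ ≤ ‖g ⟨w, hwW⟩ - x‖ * (1/8) := by
              rw [show ‖w - u‖ = ‖u - w‖ from norm_sub_rev w u]
              exact mul_le_mul_of_nonneg_left hwu (norm_nonneg _)
      have h3 := abs_le.mp h2
      rw [h1]; linarith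
    have hnormsq : ‖g ⟨w, hwW⟩ - y‖^2 < s^2 := by
      have hQy : g ⟨w, hwW⟩ - y = (g ⟨w, hwW⟩ - x) - s • u := by rw [hy_eq]; abel
      have hexp : ‖g ⟨w, hwW⟩ - y‖^2
          = ‖g ⟨w, hwW⟩ - x‖^2 - 2*(s*⟪g ⟨w, hwW⟩ - x, u⟫) + s^2 := by
        rw [hQy, norm_sub_sq_real, real_inner_smul_right, norm_smul, Real.norm_eq_abs,
          abs_of_nonneg hs0.le, hu1]
        ring
      rw [hexp]
      have h4 : s * ‖g ⟨w, hwW⟩ - x‖ ≤ 2*(s*⟪g ⟨w, hwW⟩ - x, u⟫) := by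
        nlinarith [mul_nonneg hs0.le (sub_nonneg.mpr hQu)]
      nlinarith [mul_lt_mul_of_pos_right (show ‖g ⟨w, hwW⟩ - x‖ < s by linarith) ha_pos]
    have hQy_lt : ‖g ⟨w, hwW⟩ - y‖ < s := lt_of_pow_lt_pow_left₀ 2 hs0.le hnormsq
    refine Set.mem_iUnion.mpr ⟨W.equivFin ⟨w, hwW⟩, ?_⟩
    show dist (g (W.equivFin.symm (W.equivFin ⟨w, hwW⟩))) y < t
    rw [Equiv.symm_apply_apply, dist_eq_norm]
    linarith
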